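/- Let n ≥ 1, p ≥ 1, let f : (Fin n → Fin 2) → ℝ, let a be a permutation of Fin n that is a symmetry of f (f(a·x) = f(x) for all bitstrings x), and let A be the permutation unitary induced by a. Then for all parameters β, γ : Fin p → ℝ, the depth-p QAOA state is invariant under A: A |β,γ⟩ = |β,γ⟩. -/

import Mathlib

open scoped Classical
open Matrix

namespace QAOA

/-- Bitstrings on `n` bits: the computational basis index set. -/
abbrev Bit (n : ℕ) := Fin n → Fin 2

/-- Pauli-Z on qubit `j`: diagonal with entries `(-1)^(x j)`. -/
noncomputable def Zop (n : ℕ) (j : Fin n) : Matrix (Bit n) (Bit n) ℂ :=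
  Matrix.diagonal fun x => (-1 : ℂ) ^ (x j : ℕ)

/-- Flip bit `j` of bitstring `x`. -/
def flip {n : ℕ} (x : Bit n) (j : Fin n) : Bit n := Function.update x j (1 - x j)

/-- Pauli-X on qubit `j`. -/
noncomputable def Xop (n : ℕ) (j : Fin n) : Matrix (Bit n) (Bit n) ℂ :=
  Matrix.of fun x y => if y = flip x j then 1 else 0

/-- The Z-product observable `Z_S = ∏_{j ∈ S} Z_j`. -/
noncomputable def Zprod (n : ℕ) (S : Finset (Fin n)) : Matrix (Bit n) (Bit n) ℂ :=
  (S.toList.map (Zop n)).prod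

/-- The mixing Hamiltonian `B = ∑ j, X_j`. -/
noncomputable def mixB (n : ℕ) : Matrix (Bit n) (Bit n) ℂ := ∑ j, Xop n j

/-- The cost Hamiltonian `H(f)`, diagonal with entries `f x`. -/
noncomputable def costH (n : ℕ) (f : Bit n → ℝ) : Matrix (Bit n) (Bit n) ℂ :=
  Matrix.diagonal fun x => (f x : ℂ)

/-- The uniform superposition `|s⟩`, all entries `2^(-n/2)`. -/
noncomputable def uniform (n : ℕ) : Bit n → ℂ := fun _ => (((2 : ℝ) ^ (-(n : ℝ) / 2) : ℝ) : ℂ)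

/-- The depth-`p` QAOA state
`|β,γ⟩ = exp(-i β_p B) exp(-i γ_p H(f)) ⋯ exp(-i β_1 B) exp(-i γ_1 H(f)) |s⟩`. -/
noncomputable def qaoaState (n p : ℕ) (f : Bit n → ℝ) (β γ : Fin p → ℝ) : Bit n → ℂ :=
  ((List.finRange p).map fun k =>
      NormedSpace.exp ((-Complex.I * (β k : ℂ)) • mixB n) *
      NormedSpace.exp ((-Complex.I * (γ k : ℂ)) • costH n f)).reverse.prod *ᵥ uniform n

/-- The expectation `⟨ψ|M|ψ⟩ = ∑ x, conj (ψ x) * (M ψ) x`. -/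
noncomputable def expectation {n : ℕ} (M : Matrix (Bit n) (Bit n) ℂ) (ψ : Bit n → ℂ) : ℂ :=
  ∑ x, star (ψ x) * (M *ᵥ ψ) x

/-- The action of a permutation of qubit indices on bitstrings: `(a·x) j = x (a⁻¹ j)`. -/
def permAct {n : ℕ} (a : Equiv.Perm (Fin n)) (x : Bit n) : Bit n := fun j => x (a⁻¹ j)

/-- The permutation unitary induced by `a`: `A x y = 1` iff `x = a·y`. -/
noncomputable def permMat {n : ℕ} (a : Equiv.Perm (Fin n)) : Matrix (Bit n) (Bit n) ℂ :=
  Matrix.of fun x y => if x = permAct a y then 1 else 0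


lemma permAct_permAct {n : ℕ} (a b : Equiv.Perm (Fin n)) (x : Bit n) :
    permAct a (permAct b x) = permAct (a * b) x := by
  funext j; simp [permAct]

lemma permAct_inv_permAct {n : ℕ} (a : Equiv.Perm (Fin n)) (x : Bit n) :
    permAct a⁻¹ (permAct a x) = x := by
  funext j; simp [permAct]

lemma permAct_permAct_inv {n : ℕ} (a : Equiv.Perm (Fin n)) (x : Bit n) :
    permAct a (permAct a⁻¹ x) = x := by
  funext j; simp [permAct]

lemma eq_permAct_iff {n : ℕ} (a : Equiv.Perm (Fin n)) (x y : Bit n) :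
    x = permAct a y ↔ permAct a⁻¹ x = y := by
  constructor
  · rintro rfl; exact permAct_inv_permAct a y
  · rintro rfl; exact (permAct_permAct_inv a x).symm

lemma permAct_flip {n : ℕ} (a : Equiv.Perm (Fin n)) (z : Bit n) (j : Fin n) :
    permAct a (flip z j) = flip (permAct a z) (a j) := by
  funext k
  by_cases h : k = a j
  · subst h
    simp [permAct, flip, Function.update]
  · have h' : a⁻¹ k ≠ j := fun hc => h (by simp [← hc])
    simp [permAct, flip, Function.update, h, h']
    exact fun hc => absurd hc h'

lemma permMat_mul_costH {n : ℕ} (a : Equiv.Perm (Fin n)) (f : Bit n → ℝ)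
    (hsym : ∀ x : Bit n, f (permAct a x) = f x) :
    Commute (permMat a) (costH n f) := by
  show _ = _
  ext x y
  rw [costH, Matrix.mul_diagonal, Matrix.diagonal_mul]
  simp only [permMat, Matrix.of_apply]
  by_cases h : x = permAct a y
  · subst h; simp [hsym y]
  · simp [h]

lemma permMat_mul_Xop {n : ℕ} (a : Equiv.Perm (Fin n)) (j : Fin n) :
    permMat a * Xop n j = Xop n (a j) * permMat a := by
  ext x y
  simp only [Matrix.mul_apply, permMat, Xop, Matrix.of_apply, ite_mul, one_mul, zero_mul]
  simp only [eq_permAct_iff, Finset.sum_ite_eq, Finset.sum_ite_eq', Finset.mem_univ, if_true]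
  have key : permAct a⁻¹ (flip x (a j)) = flip (permAct a⁻¹ x) j := by
    rw [permAct_flip a⁻¹ x (a j)]
    simp
  rw [key]
  by_cases h : y = flip (permAct a⁻¹ x) j
  · rw [if_pos h, if_pos h.symm]
  · rw [if_neg h, if_neg (fun hc => h hc.symm)]

lemma permMat_mul_mixB {n : ℕ} (a : Equiv.Perm (Fin n)) :
    Commute (permMat a) (mixB n) := by
  show _ = _
  rw [mixB, Finset.mul_sum, Finset.sum_mul]
  rw [Finset.sum_congr rfl (fun j _ => permMat_mul_Xop a j)]
  exact (Equiv.sum_comp a (fun j => Xop n j * permMat a))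

lemma permMat_mulVec_uniform {n : ℕ} (a : Equiv.Perm (Fin n)) :
    permMat a *ᵥ uniform n = uniform n := by
  funext x
  simp only [Matrix.mulVec, dotProduct, permMat, uniform, Matrix.of_apply,
    ite_mul, one_mul, zero_mul]
  simp only [eq_permAct_iff, Finset.sum_ite_eq, Finset.mem_univ, if_true]

/-- If `a` is a symmetry of `f`, then the QAOA state is invariant
under the induced permutation unitary: `A |β,γ⟩ = |β,γ⟩`. -/
theorem qaoaState_invariant (n p : ℕ) (hn : 1 ≤ n) (hp : 1 ≤ p)
    (f : Bit n → ℝ) (a : Equiv.Perm (Fin n))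
    (hsym : ∀ x : Bit n, f (permAct a x) = f x)
    (β γ : Fin p → ℝ) :
    permMat a *ᵥ qaoaState n p f β γ = qaoaState n p f β γ := by
  set L := ((List.finRange p).map fun k =>
      NormedSpace.exp ((-Complex.I * (β k : ℂ)) • mixB n) *
      NormedSpace.exp ((-Complex.I * (γ k : ℂ)) • costH n f)).reverse with hL
  have hcomm : Commute (permMat a) L.prod := by
    apply Commute.list_prod_right
    intro M hM
    rw [hL, List.mem_reverse, List.mem_map] at hM
    obtain ⟨k, -, rfl⟩ := hM
    exact ((((permMat_mul_mixB a).smul_right _).exp_right).mul_right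
      ((((permMat_mul_costH a f hsym)).smul_right _).exp_right))
  rw [qaoaState, ← hL, Matrix.mulVec_mulVec, hcomm.eq, ← Matrix.mulVec_mulVec,
    permMat_mulVec_uniform]

end QAOA
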